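/- arXiv:2209.07432 — 3 statements merged into one kernel-verified Lean document; each statement's English description precedes it below -/
import Mathlib

section
/- (Auxiliary function bound for expectations.) Let f : ℝ × ℝⁿ → ℝⁿ, T > 0, X₀ ⊆ X ⊆ ℝⁿ, and suppose for each x₀ ∈ X₀ the solution x(·; x₀) of x' = f(t,x), x(0) = x₀ exists on [0,T], is differentiable, and remains in X. Suppose v ∈ C¹([0,T] × X), α ∈ ℝ, β ∈ ℝᵐ₊ satisfy: (i) ∂ₜv + f·∇ₓv ≤ 0 on [0,T] × X; (ii) g(x) ≤ v(T,x) for all x ∈ X; (iii) v(0,x) ≤ α + β ⬝ h(x) for all x ∈ X₀. Then for every probability measure μ₀ on X₀ with ∫ h dμ₀ ≤ c (componentwise) and with x₀ ↦ g(x(T;x₀)) integrable, one has ∫ g(x(T;x₀)) dμ₀(x₀) ≤ α + β ⬝ c. -/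
open Set MeasureTheory

/-- Auxiliary function bound for expectations. If `v` is C¹ with
nonpositive Lie derivative on `[0,T] × X`, `g ≤ v(T,·)` on `X`, and
`v(0,·) ≤ α + β ⬝ h` on `X₀` with `β ≥ 0`, then for every probability measure `μ₀`
supported on `X₀` with `∫ h dμ₀ ≤ c` componentwise, the expected terminal observable
satisfies `∫ g(x(T;x₀)) dμ₀ ≤ α + β ⬝ c`. -/
theorem stmt2 (n m : ℕ) (f : ℝ → (Fin n → ℝ) → Fin n → ℝ) (T : ℝ) (hT : 0 < T)
    (X₀ X : Set (Fin n → ℝ)) (hXX : X₀ ⊆ X)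
    (Φ : ℝ → (Fin n → ℝ) → Fin n → ℝ)
    (hΦ0 : ∀ x₀ ∈ X₀, Φ 0 x₀ = x₀)
    (hΦode : ∀ x₀ ∈ X₀, ∀ t ∈ Icc (0:ℝ) T,
      HasDerivAt (fun s => Φ s x₀) (f t (Φ t x₀)) t)
    (hΦX : ∀ x₀ ∈ X₀, ∀ t ∈ Icc (0:ℝ) T, Φ t x₀ ∈ X)
    (v : ℝ × (Fin n → ℝ) → ℝ) (hv : ContDiff ℝ 1 v)
    (g : (Fin n → ℝ) → ℝ) (h : (Fin n → ℝ) → Fin m → ℝ) (c : Fin m → ℝ)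
    (α : ℝ) (β : Fin m → ℝ) (hβ : ∀ i, 0 ≤ β i)
    (hLv : ∀ t ∈ Icc (0:ℝ) T, ∀ y ∈ X, fderiv ℝ v (t, y) (1, f t y) ≤ 0)
    (hterm : ∀ x ∈ X, g x ≤ v (T, x))
    (hinit : ∀ x ∈ X₀, v (0, x) ≤ α + ∑ i, β i * h x i)
    (μ₀ : Measure (Fin n → ℝ)) [IsProbabilityMeasure μ₀] (hsupp : μ₀ X₀ᶜ = 0)
    (hint_h : ∀ i, Integrable (fun x => h x i) μ₀)
    (hmom : ∀ i, ∫ x, h x i ∂μ₀ ≤ c i)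
    (hint_g : Integrable (fun x₀ => g (Φ T x₀)) μ₀) :
    ∫ x₀, g (Φ T x₀) ∂μ₀ ≤ α + ∑ i, β i * c i := by
  -- Pointwise bound on X₀
  have key : ∀ x₀ ∈ X₀, g (Φ T x₀) ≤ α + ∑ i, β i * h x₀ i := by
    intro x₀ hx₀
    have hderiv : ∀ t ∈ Icc (0:ℝ) T,
        HasDerivAt (fun s => v (s, Φ s x₀))
          (fderiv ℝ v (t, Φ t x₀) (1, f t (Φ t x₀))) t := by
      intro t ht
      have h1 : HasDerivAt (fun s => ((s : ℝ), Φ s x₀)) (1, f t (Φ t x₀)) t :=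
        HasDerivAt.prodMk (hasDerivAt_id t) (hΦode x₀ hx₀ t ht)
      exact ((hv.differentiable one_ne_zero (t, Φ t x₀)).hasFDerivAt).comp_hasDerivAt t h1
    have hanti : AntitoneOn (fun s => v (s, Φ s x₀)) (Icc 0 T) := by
      apply antitoneOn_of_deriv_nonpos (convex_Icc 0 T)
      · exact fun t ht => ((hderiv t ht).continuousAt).continuousWithinAt
      · intro t ht
        rw [interior_Icc] at ht
        exact ((hderiv t (Ioo_subset_Icc_self ht)).differentiableAt).differentiableWithinAt
      · intro t ht
        rw [interior_Icc] at ht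
        rw [(hderiv t (Ioo_subset_Icc_self ht)).deriv]
        exact hLv t (Ioo_subset_Icc_self ht) _ (hΦX x₀ hx₀ t (Ioo_subset_Icc_self ht))
    have h1 : g (Φ T x₀) ≤ v (T, Φ T x₀) :=
      hterm _ (hΦX x₀ hx₀ T ⟨le_of_lt hT, le_rfl⟩)
    have h2 : v (T, Φ T x₀) ≤ v (0, Φ 0 x₀) :=
      hanti ⟨le_rfl, le_of_lt hT⟩ ⟨le_of_lt hT, le_rfl⟩ (le_of_lt hT)
    have h3 : v (0, Φ 0 x₀) ≤ α + ∑ i, β i * h x₀ i := by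
      rw [hΦ0 x₀ hx₀]; exact hinit x₀ hx₀
    linarith
  have hae : ∀ᵐ x₀ ∂μ₀, x₀ ∈ X₀ := by
    rw [ae_iff]
    exact hsupp
  have hint_rhs : Integrable (fun x₀ => α + ∑ i, β i * h x₀ i) μ₀ := by
    apply (integrable_const α).add
    exact integrable_finset_sum _ (fun i _ => (hint_h i).const_mul (β i))
  have hmono : ∫ x₀, g (Φ T x₀) ∂μ₀ ≤ ∫ x₀, (α + ∑ i, β i * h x₀ i) ∂μ₀ := by
    apply integral_mono_ae hint_g hint_rhs
    filter_upwards [hae] with x₀ hx₀ using key x₀ hx₀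
  calc ∫ x₀, g (Φ T x₀) ∂μ₀ ≤ ∫ x₀, (α + ∑ i, β i * h x₀ i) ∂μ₀ := hmono
    _ = α + ∑ i, β i * ∫ x₀, h x₀ i ∂μ₀ := by
        rw [integral_add (integrable_const α)
          (integrable_finset_sum _ (fun i _ => (hint_h i).const_mul (β i))),
          integral_const, probReal_univ, smul_eq_mul, one_mul,
          integral_finset_sum _ (fun i _ => (hint_h i).const_mul (β i))]
        simp_rw [MeasureTheory.integral_const_mul]
    _ ≤ α + ∑ i, β i * c i := by
        have h1 : ∀ i, β i * ∫ x₀, h x₀ i ∂μ₀ ≤ β i * c i :=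
          fun i => mul_le_mul_of_nonneg_left (hmom i) (hβ i)
        have h2 := Finset.sum_le_sum (fun i (_ : i ∈ Finset.univ) => h1 i)
        linarith
end

section
/- (Pointwise pathwise bound.) Under the hypotheses of the auxiliary function conditions — v ∈ C¹ with ℒv ≤ 0 on [0,T] × X, g ≤ v(T,·) on X, and v(0,·) ≤ α + β ⬝ h on X₀ — for every x₀ ∈ X₀ the chain of inequalities g(x(T;x₀)) ≤ v(T, x(T;x₀)) ≤ v(0, x₀) ≤ α + β ⬝ h(x₀) holds. -/
open Set MeasureTheory

/-- Pointwise pathwise bound. Under the auxiliary-function conditions,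
for every `x₀ ∈ X₀` the chain of inequalities
`g(x(T;x₀)) ≤ v(T, x(T;x₀)) ≤ v(0, x₀) ≤ α + β ⬝ h(x₀)` holds. -/
theorem stmt3 (n m : ℕ) (f : ℝ → (Fin n → ℝ) → Fin n → ℝ) (T : ℝ) (hT : 0 < T)
    (X₀ X : Set (Fin n → ℝ)) (hXX : X₀ ⊆ X)
    (Φ : ℝ → (Fin n → ℝ) → Fin n → ℝ)
    (hΦ0 : ∀ x₀ ∈ X₀, Φ 0 x₀ = x₀)
    (hΦode : ∀ x₀ ∈ X₀, ∀ t ∈ Icc (0:ℝ) T,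
      HasDerivAt (fun s => Φ s x₀) (f t (Φ t x₀)) t)
    (hΦX : ∀ x₀ ∈ X₀, ∀ t ∈ Icc (0:ℝ) T, Φ t x₀ ∈ X)
    (v : ℝ × (Fin n → ℝ) → ℝ) (hv : ContDiff ℝ 1 v)
    (g : (Fin n → ℝ) → ℝ) (h : (Fin n → ℝ) → Fin m → ℝ)
    (α : ℝ) (β : Fin m → ℝ) (hβ : ∀ i, 0 ≤ β i)
    (hLv : ∀ t ∈ Icc (0:ℝ) T, ∀ y ∈ X, fderiv ℝ v (t, y) (1, f t y) ≤ 0)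
    (hterm : ∀ x ∈ X, g x ≤ v (T, x))
    (hinit : ∀ x ∈ X₀, v (0, x) ≤ α + ∑ i, β i * h x i) :
    ∀ x₀ ∈ X₀,
      g (Φ T x₀) ≤ v (T, Φ T x₀) ∧
      v (T, Φ T x₀) ≤ v (0, x₀) ∧
      v (0, x₀) ≤ α + ∑ i, β i * h x₀ i := by
  intro x₀ hx₀
  have hTmem : T ∈ Icc (0:ℝ) T := ⟨le_of_lt hT, le_refl T⟩
  have h0mem : (0:ℝ) ∈ Icc (0:ℝ) T := ⟨le_refl 0, le_of_lt hT⟩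
  have hderiv : ∀ t ∈ Icc (0:ℝ) T,
      HasDerivAt (fun s => v (s, Φ s x₀)) (fderiv ℝ v (t, Φ t x₀) (1, f t (Φ t x₀))) t := by
    intro t ht
    have h1 : HasDerivAt (fun s => (s, Φ s x₀)) ((1:ℝ), f t (Φ t x₀)) t :=
      (hasDerivAt_id t).prodMk (hΦode x₀ hx₀ t ht)
    have h2 : HasFDerivAt v (fderiv ℝ v (t, Φ t x₀)) (t, Φ t x₀) :=
      (hv.differentiable one_ne_zero (t, Φ t x₀)).hasFDerivAt
    exact h2.comp_hasDerivAt t h1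
  have hanti : AntitoneOn (fun s => v (s, Φ s x₀)) (Icc 0 T) := by
    apply antitoneOn_of_deriv_nonpos (convex_Icc 0 T)
    · exact fun t ht => (hderiv t ht).continuousAt.continuousWithinAt
    · intro t ht
      rw [interior_Icc] at ht
      exact ((hderiv t (Ioo_subset_Icc_self ht)).differentiableAt).differentiableWithinAt
    · intro t ht
      rw [interior_Icc] at ht
      have ht' : t ∈ Icc (0:ℝ) T := Ioo_subset_Icc_self ht
      rw [(hderiv t ht').deriv]
      exact hLv t ht' (Φ t x₀) (hΦX x₀ hx₀ t ht')
  have hmono : v (T, Φ T x₀) ≤ v (0, Φ 0 x₀) := hanti h0mem hTmem (le_of_lt hT)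
  rw [hΦ0 x₀ hx₀] at hmono
  exact ⟨hterm _ (hΦX x₀ hx₀ T hTmem), hmono, hinit x₀ hx₀⟩
end

section
/- (Tightness of the Lagrangian reformulation.) Let p(β, v) := β ⬝ c + max_{x ∈ X₀}[v(0,x) − β ⬝ h(x)] + max_{x ∈ X}[g(x) − v(T,x)] + T · max_{(t,x) ∈ [0,T]×X} ℒv(t,x) for β ∈ ℝᵐ₊ and v ∈ C¹([0,T]×X), with X₀, X compact. Then inf over all (β, v) of p(β, v) equals inf over (β, v) satisfying additionally g ≤ v(T,·) on X and ℒv ≤ 0 on [0,T]×X of {β ⬝ c + max_{x ∈ X₀}[v(0,x) − β ⬝ h(x)]}. -/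
open Set MeasureTheory

lemma sSup_image_add_const {α : Type*} (s : Set α) (φ : α → ℝ) (c : ℝ)
    (hne : s.Nonempty) (hb : BddAbove (φ '' s)) :
    sSup ((fun x => φ x + c) '' s) = sSup (φ '' s) + c := by
  have himg : (fun x => φ x + c) '' s = (fun y => y + c) '' (φ '' s) := by
    rw [← image_comp]; rfl
  have := (OrderIso.addRight c).map_csSup' (hne.image φ) hb
  rw [himg]
  simpa using this.symm

/-- Tightness of the Lagrangian reformulation. With `X₀, X` compact and
`p(β,v) = β⬝c + max_{X₀}[v(0,·) − β⬝h] + max_X[g − v(T,·)] + T·max_{[0,T]×X} ℒv`,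
the infimum of `p(β,v)` over all `β ∈ ℝᵐ₊` and C¹ functions `v` equals the infimum of
`β⬝c + max_{X₀}[v(0,·) − β⬝h]` over those `(β,v)` that additionally satisfy
`g ≤ v(T,·)` on `X` and `ℒv ≤ 0` on `[0,T] × X` (infima taken in the extended reals,
maxima realized as suprema of images). -/
theorem stmt18 (n m : ℕ) (f : ℝ → (Fin n → ℝ) → Fin n → ℝ)
    (hf : Continuous fun q : ℝ × (Fin n → ℝ) => f q.1 q.2)
    (T : ℝ) (hT : 0 < T)
    (X₀ X : Set (Fin n → ℝ)) (hX₀c : IsCompact X₀) (hX₀ne : X₀.Nonempty)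
    (hXc : IsCompact X) (hXne : X.Nonempty)
    (g : (Fin n → ℝ) → ℝ) (hg : Continuous g)
    (h : (Fin n → ℝ) → Fin m → ℝ) (hh : ∀ i, Continuous fun x => h x i)
    (c : Fin m → ℝ) :
    sInf {r : EReal | ∃ (β : Fin m → ℝ) (v : ℝ × (Fin n → ℝ) → ℝ),
        (∀ i, 0 ≤ β i) ∧ ContDiff ℝ 1 v ∧
        r = (((∑ i, β i * c i)
          + sSup ((fun x => v (0, x) - ∑ i, β i * h x i) '' X₀)
          + sSup ((fun x => g x - v (T, x)) '' X)
          + T * sSup ((fun q : ℝ × (Fin n → ℝ) =>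
              fderiv ℝ v q (1, f q.1 q.2)) '' (Icc (0:ℝ) T ×ˢ X)) : ℝ) : EReal)} =
    sInf {r : EReal | ∃ (β : Fin m → ℝ) (v : ℝ × (Fin n → ℝ) → ℝ),
        (∀ i, 0 ≤ β i) ∧ ContDiff ℝ 1 v ∧
        (∀ x ∈ X, g x ≤ v (T, x)) ∧
        (∀ t ∈ Icc (0:ℝ) T, ∀ y ∈ X, fderiv ℝ v (t, y) (1, f t y) ≤ 0) ∧
        r = (((∑ i, β i * c i)
          + sSup ((fun x => v (0, x) - ∑ i, β i * h x i) '' X₀) : ℝ) : EReal)} := by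
  have hprodne : (Icc (0:ℝ) T ×ˢ X).Nonempty := (nonempty_Icc.2 hT.le).prod hXne
  have hprodc : IsCompact (Icc (0:ℝ) T ×ˢ X) := isCompact_Icc.prod hXc
  apply le_antisymm
  · -- LHS ≤ RHS
    apply le_sInf
    rintro r ⟨β, v, hβ, hv, hgv, hLv, rfl⟩
    -- the same (β, v) is feasible for the left set with smaller value
    have hcontg : Continuous fun x => g x - v (T, x) :=
      hg.sub (hv.continuous.comp (Continuous.prodMk_right T))
    have hcontL : Continuous fun q : ℝ × (Fin n → ℝ) => fderiv ℝ v q (1, f q.1 q.2) :=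
      (hv.continuous_fderiv one_ne_zero).clm_apply (continuous_const.prodMk hf)
    have hSX : sSup ((fun x => g x - v (T, x)) '' X) ≤ 0 := by
      apply Real.sSup_nonpos
      rintro y ⟨x, hx, rfl⟩
      simpa using hgv x hx
    have hSL : sSup ((fun q : ℝ × (Fin n → ℝ) =>
        fderiv ℝ v q (1, f q.1 q.2)) '' (Icc (0:ℝ) T ×ˢ X)) ≤ 0 := by
      apply Real.sSup_nonpos
      rintro y ⟨⟨t, x⟩, ⟨ht, hx⟩, rfl⟩
      exact hLv t ht x hx
    refine sInf_le_of_le ⟨β, v, hβ, hv, rfl⟩ ?_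
    have : ((∑ i, β i * c i)
          + sSup ((fun x => v (0, x) - ∑ i, β i * h x i) '' X₀)
          + sSup ((fun x => g x - v (T, x)) '' X)
          + T * sSup ((fun q : ℝ × (Fin n → ℝ) =>
              fderiv ℝ v q (1, f q.1 q.2)) '' (Icc (0:ℝ) T ×ˢ X)) : ℝ) ≤
        ((∑ i, β i * c i)
          + sSup ((fun x => v (0, x) - ∑ i, β i * h x i) '' X₀) : ℝ) := by
      nlinarith [mul_nonpos_of_nonneg_of_nonpos hT.le hSL]
    exact_mod_cast this
  · -- RHS ≤ LHS
    apply le_sInf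
    rintro r ⟨β, v, hβ, hv, rfl⟩
    set A := sSup ((fun x => g x - v (T, x)) '' X) with hA
    set B := sSup ((fun q : ℝ × (Fin n → ℝ) =>
        fderiv ℝ v q (1, f q.1 q.2)) '' (Icc (0:ℝ) T ×ˢ X)) with hB
    set v' : ℝ × (Fin n → ℝ) → ℝ := fun q => v q + (A + T * B) - B * q.1 with hv'def
    have hcontg : Continuous fun x => g x - v (T, x) :=
      hg.sub (hv.continuous.comp (Continuous.prodMk_right T))
    have hcontL : Continuous fun q : ℝ × (Fin n → ℝ) => fderiv ℝ v q (1, f q.1 q.2) :=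
      (hv.continuous_fderiv one_ne_zero).clm_apply (continuous_const.prodMk hf)
    have hbX : BddAbove ((fun x => g x - v (T, x)) '' X) :=
      (hXc.image hcontg).bddAbove
    have hbL : BddAbove ((fun q : ℝ × (Fin n → ℝ) =>
        fderiv ℝ v q (1, f q.1 q.2)) '' (Icc (0:ℝ) T ×ˢ X)) :=
      (hprodc.image hcontL).bddAbove
    have hv' : ContDiff ℝ 1 v' := by
      apply (hv.add contDiff_const).sub
      exact (contDiff_fst.const_smul B : ContDiff ℝ 1 fun q : ℝ × (Fin n → ℝ) => B • q.1)
    -- fderiv of v'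
    have hfd : ∀ q : ℝ × (Fin n → ℝ), ∀ w : Fin n → ℝ,
        fderiv ℝ v' q (1, w) = fderiv ℝ v q (1, w) - B := by
      intro q w
      have h1 : HasFDerivAt v (fderiv ℝ v q) q := (hv.differentiable one_ne_zero q).hasFDerivAt
      have h2 : HasFDerivAt (fun q : ℝ × (Fin n → ℝ) => B * q.1)
          (B • ContinuousLinearMap.fst ℝ ℝ (Fin n → ℝ)) q := hasFDerivAt_fst.const_mul B
      have h3 : HasFDerivAt v'
          (fderiv ℝ v q - B • ContinuousLinearMap.fst ℝ ℝ (Fin n → ℝ)) q :=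
        (h1.add_const (A + T * B)).sub h2
      rw [h3.fderiv]
      simp
    -- constraints for v'
    have hc1 : ∀ x ∈ X, g x ≤ v' (T, x) := by
      intro x hx
      have : g x - v (T, x) ≤ A := le_csSup hbX (mem_image_of_mem _ hx)
      simp only [hv'def]
      nlinarith
    have hc2 : ∀ t ∈ Icc (0:ℝ) T, ∀ y ∈ X, fderiv ℝ v' (t, y) (1, f t y) ≤ 0 := by
      intro t ht y hy
      rw [hfd (t, y) (f t y)]
      have : fderiv ℝ v (t, y) (1, f t y) ≤ B :=
        le_csSup hbL (mem_image_of_mem _ (mk_mem_prod ht hy))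
      linarith
    -- value of v'
    have hcont0 : Continuous fun x => v (0, x) - ∑ i, β i * h x i :=
      (hv.continuous.comp (Continuous.prodMk_right 0)).sub
        (continuous_finset_sum _ fun i _ => continuous_const.mul (hh i))
    have hval : sSup ((fun x => v' (0, x) - ∑ i, β i * h x i) '' X₀) =
        sSup ((fun x => v (0, x) - ∑ i, β i * h x i) '' X₀) + (A + T * B) := by
      have : (fun x => v' (0, x) - ∑ i, β i * h x i) =
          fun x => (v (0, x) - ∑ i, β i * h x i) + (A + T * B) := by
        funext x; simp only [hv'def]; ring
      rw [this]
      exact sSup_image_add_const X₀ _ _ hX₀ne (hX₀c.image hcont0).bddAbove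
    refine sInf_le_of_le ⟨β, v', hβ, hv', hc1, hc2, rfl⟩ ?_
    have : ((∑ i, β i * c i)
          + sSup ((fun x => v' (0, x) - ∑ i, β i * h x i) '' X₀) : ℝ) =
        ((∑ i, β i * c i)
          + sSup ((fun x => v (0, x) - ∑ i, β i * h x i) '' X₀)
          + A + T * B : ℝ) := by
      rw [hval]; ring
    rw [hA, hB] at this
    exact_mod_cast le_of_eq this
end
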